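/- arXiv:1402.4087 — 2 statements merged into one kernel-verified Lean document; each statement's English description precedes it below -/
import Mathlib

section
/- Define FL : ℝ¹² → ℝ¹⁰ by FL(x, y, u, u₁, u₂, u₂₀, u₁₁, u₀₂, u₃₀, u₂₁, u₁₂, u₀₃) := (x, y, u, u₁, u₂, −u₃₀ − u₁₂, −u₂₁ − u₀₃, u₂₀, 2u₁₁, u₀₂) (the restricted Legendre map of the clamped-plate Lagrangian L = ½(u₂₀² + 2u₁₁² + u₀₂² − 2qu)), and define Υ : ℝ¹⁰ → ℝ¹² by Υ(x, y, u, u₁, u₂, p¹, p², p²⁰, p¹¹, p⁰²) := (x, y, u, u₁, u₂, p²⁰, ½p¹¹, p⁰², −½p¹, −½p², −½p¹, −½p²). Then FL ∘ Υ = id on ℝ¹⁰; in particular FL is surjective and the total derivative of FL at every point of ℝ¹² has rank 10 (the clamped-plate Lagrangian is hyperregular). -/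
noncomputable section

/-- The restricted Legendre map of the clamped-plate Lagrangian
`L = ½(u₂₀² + 2u₁₁² + u₀₂² − 2qu)`, in coordinates
`(x, y, u, u₁, u₂, u₂₀, u₁₁, u₀₂, u₃₀, u₂₁, u₁₂, u₀₃) ↦
 (x, y, u, u₁, u₂, p¹, p², p²⁰, p¹¹, p⁰²)`. -/
def FLplate : (Fin 12 → ℝ) → (Fin 10 → ℝ) := fun v =>
  ![v 0, v 1, v 2, v 3, v 4, -v 8 - v 10, -v 9 - v 11, v 5, 2 * v 6, v 7]

/-- The global section `Υ` of `FLplate`. -/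
def Upsilon : (Fin 10 → ℝ) → (Fin 12 → ℝ) := fun w =>
  ![w 0, w 1, w 2, w 3, w 4, w 7, (1 / 2) * w 8, w 9,
    -(1 / 2) * w 5, -(1 / 2) * w 6, -(1 / 2) * w 5, -(1 / 2) * w 6]

lemma v10_5 {α : Type*} (a0 a1 a2 a3 a4 a5 a6 a7 a8 a9 : α) : (![a0, a1, a2, a3, a4, a5, a6, a7, a8, a9] : Fin 10 → α) 5 = a5 := rfl
lemma v10_6 {α : Type*} (a0 a1 a2 a3 a4 a5 a6 a7 a8 a9 : α) : (![a0, a1, a2, a3, a4, a5, a6, a7, a8, a9] : Fin 10 → α) 6 = a6 := rfl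
lemma v10_7 {α : Type*} (a0 a1 a2 a3 a4 a5 a6 a7 a8 a9 : α) : (![a0, a1, a2, a3, a4, a5, a6, a7, a8, a9] : Fin 10 → α) 7 = a7 := rfl
lemma v10_8 {α : Type*} (a0 a1 a2 a3 a4 a5 a6 a7 a8 a9 : α) : (![a0, a1, a2, a3, a4, a5, a6, a7, a8, a9] : Fin 10 → α) 8 = a8 := rfl
lemma v10_9 {α : Type*} (a0 a1 a2 a3 a4 a5 a6 a7 a8 a9 : α) : (![a0, a1, a2, a3, a4, a5, a6, a7, a8, a9] : Fin 10 → α) 9 = a9 := rfl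
lemma v12_5 {α : Type*} (a0 a1 a2 a3 a4 a5 a6 a7 a8 a9 a10 a11 : α) : (![a0, a1, a2, a3, a4, a5, a6, a7, a8, a9, a10, a11] : Fin 12 → α) 5 = a5 := rfl
lemma v12_6 {α : Type*} (a0 a1 a2 a3 a4 a5 a6 a7 a8 a9 a10 a11 : α) : (![a0, a1, a2, a3, a4, a5, a6, a7, a8, a9, a10, a11] : Fin 12 → α) 6 = a6 := rfl
lemma v12_7 {α : Type*} (a0 a1 a2 a3 a4 a5 a6 a7 a8 a9 a10 a11 : α) : (![a0, a1, a2, a3, a4, a5, a6, a7, a8, a9, a10, a11] : Fin 12 → α) 7 = a7 := rfl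
lemma v12_8 {α : Type*} (a0 a1 a2 a3 a4 a5 a6 a7 a8 a9 a10 a11 : α) : (![a0, a1, a2, a3, a4, a5, a6, a7, a8, a9, a10, a11] : Fin 12 → α) 8 = a8 := rfl
lemma v12_9 {α : Type*} (a0 a1 a2 a3 a4 a5 a6 a7 a8 a9 a10 a11 : α) : (![a0, a1, a2, a3, a4, a5, a6, a7, a8, a9, a10, a11] : Fin 12 → α) 9 = a9 := rfl
lemma v12_10 {α : Type*} (a0 a1 a2 a3 a4 a5 a6 a7 a8 a9 a10 a11 : α) : (![a0, a1, a2, a3, a4, a5, a6, a7, a8, a9, a10, a11] : Fin 12 → α) 10 = a10 := rfl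
lemma v12_11 {α : Type*} (a0 a1 a2 a3 a4 a5 a6 a7 a8 a9 a10 a11 : α) : (![a0, a1, a2, a3, a4, a5, a6, a7, a8, a9, a10, a11] : Fin 12 → α) 11 = a11 := rfl

/-- `FLplate` as a linear map. -/
def FLlin : (Fin 12 → ℝ) →ₗ[ℝ] (Fin 10 → ℝ) where
  toFun := FLplate
  map_add' v w := by
    funext i
    fin_cases i <;> simp [FLplate, v10_5, v10_6, v10_7, v10_8, v10_9, v12_5, v12_6, v12_7, v12_8, v12_9, v12_10, v12_11] <;> ring
  map_smul' c v := by
    funext i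
    fin_cases i <;> simp [FLplate, v10_5, v10_6, v10_7, v10_8, v10_9, v12_5, v12_6, v12_7, v12_8, v12_9, v12_10, v12_11] <;> ring

lemma comp_eq_id : FLplate ∘ Upsilon = id := by
  funext w i
  fin_cases i <;> simp [FLplate, Upsilon, v10_5, v10_6, v10_7, v10_8, v10_9, v12_5, v12_6, v12_7, v12_8, v12_9, v12_10, v12_11] <;> ring

lemma FL_surj : Function.Surjective FLplate :=
  Function.RightInverse.surjective (fun w => congrFun comp_eq_id w)

/-- `FL ∘ Υ = id`; in particular `FL` is surjective and its Fréchet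
derivative has rank 10 everywhere (the clamped-plate Lagrangian is hyperregular). -/
theorem statement12 :
    (FLplate ∘ Upsilon = id) ∧
    Function.Surjective FLplate ∧
    (∀ a : Fin 12 → ℝ,
      Module.finrank ℝ ↥(LinearMap.range ((fderiv ℝ FLplate a : (Fin 12 → ℝ) →L[ℝ] (Fin 10 → ℝ)) : (Fin 12 → ℝ) →ₗ[ℝ] (Fin 10 → ℝ))) = 10) := by
  refine ⟨comp_eq_id, FL_surj, fun a => ?_⟩
  have h1 : FLplate = ⇑(LinearMap.toContinuousLinearMap FLlin) := rfl
  have h2 : fderiv ℝ FLplate a = LinearMap.toContinuousLinearMap FLlin := by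
    rw [h1]; exact (LinearMap.toContinuousLinearMap FLlin).fderiv
  rw [h2]
  have hr : LinearMap.range (((LinearMap.toContinuousLinearMap FLlin : (Fin 12 → ℝ) →L[ℝ] (Fin 10 → ℝ))) : (Fin 12 → ℝ) →ₗ[ℝ] (Fin 10 → ℝ)) = ⊤ := by
    rw [LinearMap.range_eq_top]
    exact FL_surj
  rw [hr]
  simp [finrank_top]
end
end

section
/- Let q ∈ ℝ. A smooth function u : ℝ² → ℝ (coordinates (x, y)) satisfies the clamped-plate equation ∂⁴u/∂x⁴ + 2∂⁴u/∂x²∂y² + ∂⁴u/∂y⁴ = q on ℝ² if and only if there exist smooth functions u₁, u₂, p¹, p², p²⁰, p¹¹, p⁰² : ℝ² → ℝ satisfying on all of ℝ² the first-order system: ∂u/∂x = u₁, ∂u/∂y = u₂, ∂u₁/∂x = p²⁰, ∂u₁/∂y + ∂u₂/∂x = p¹¹, ∂u₂/∂y = p⁰², ∂p¹/∂x + ∂p²/∂y + q = 0, ∂p²⁰/∂x + ½ ∂p¹¹/∂y + p¹ = 0, and ½ ∂p¹¹/∂x + ∂p⁰²/∂y + p² = 0. -/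
noncomputable section

/-- Partial derivative in the first coordinate (`x`) on `ℝ²`. -/
def pdx (f : ℝ × ℝ → ℝ) : ℝ × ℝ → ℝ := fun z => fderiv ℝ f z (1, 0)
/-- Partial derivative in the second coordinate (`y`) on `ℝ²`. -/
def pdy (f : ℝ × ℝ → ℝ) : ℝ × ℝ → ℝ := fun z => fderiv ℝ f z (0, 1)

lemma fderiv_smooth {f : ℝ × ℝ → ℝ} (hf : ContDiff ℝ (⊤ : ℕ∞) f) :
    ContDiff ℝ (⊤ : ℕ∞) (fderiv ℝ f) :=
  hf.fderiv_right (m := (⊤ : ℕ∞)) (by exact_mod_cast le_top)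

lemma contDiff_pd {f : ℝ × ℝ → ℝ} (hf : ContDiff ℝ (⊤ : ℕ∞) f) (v : ℝ × ℝ) :
    ContDiff ℝ (⊤ : ℕ∞) (fun z => fderiv ℝ f z v) :=
  (fderiv_smooth hf).clm_apply contDiff_const

lemma pdx_smooth {f : ℝ × ℝ → ℝ} (hf : ContDiff ℝ (⊤ : ℕ∞) f) :
    ContDiff ℝ (⊤ : ℕ∞) (pdx f) := contDiff_pd hf _

lemma pdy_smooth {f : ℝ × ℝ → ℝ} (hf : ContDiff ℝ (⊤ : ℕ∞) f) :
    ContDiff ℝ (⊤ : ℕ∞) (pdy f) := contDiff_pd hf _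

lemma diff_pd {f : ℝ × ℝ → ℝ} (hf : ContDiff ℝ (⊤ : ℕ∞) f) (z : ℝ × ℝ) :
    DifferentiableAt ℝ (fderiv ℝ f) z :=
  ((fderiv_smooth hf).differentiable (by simp)) z

lemma diffAt {f : ℝ × ℝ → ℝ} (hf : ContDiff ℝ (⊤ : ℕ∞) f) (z : ℝ × ℝ) :
    DifferentiableAt ℝ f z :=
  (hf.differentiable (by simp)) z

lemma pd_pd_eq {f : ℝ × ℝ → ℝ} (hf : ContDiff ℝ (⊤ : ℕ∞) f) (v w z : ℝ × ℝ) :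
    fderiv ℝ (fun t => fderiv ℝ f t v) z w = fderiv ℝ (fderiv ℝ f) z w v := by
  have h := fderiv_clm_apply (diff_pd hf z) (differentiableAt_const v)
  rw [show (fun t => fderiv ℝ f t v) = (fun t => (fderiv ℝ f t) v) from rfl, h]
  simp

lemma pd_comm' {f : ℝ × ℝ → ℝ} (hf : ContDiff ℝ (⊤ : ℕ∞) f) (v w z : ℝ × ℝ) :
    fderiv ℝ (fun t => fderiv ℝ f t v) z w = fderiv ℝ (fun t => fderiv ℝ f t w) z v := by
  rw [pd_pd_eq hf, pd_pd_eq hf]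
  exact (hf.contDiffAt.isSymmSndFDerivAt (by rw [minSmoothness_of_isRCLikeNormedField]; exact WithTop.coe_le_coe.mpr (le_top : (2:ℕ∞) ≤ ⊤))).eq w v

lemma pd_comm {f : ℝ × ℝ → ℝ} (hf : ContDiff ℝ (⊤ : ℕ∞) f) : pdx (pdy f) = pdy (pdx f) := by
  funext z
  exact pd_comm' hf _ _ z

lemma pd_const_mul {g : ℝ × ℝ → ℝ} (hg : ContDiff ℝ (⊤ : ℕ∞) g) (c : ℝ) (v z : ℝ × ℝ) :
    fderiv ℝ (fun t => c * g t) z v = c * fderiv ℝ g z v := by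
  rw [((diffAt hg z).hasFDerivAt.const_mul c).fderiv]
  simp

lemma pdx_const_mul {g : ℝ × ℝ → ℝ} (hg : ContDiff ℝ (⊤ : ℕ∞) g) (c : ℝ) :
    pdx (fun t => c * g t) = fun z => c * pdx g z := by
  funext z; exact pd_const_mul hg c _ z

lemma pdy_const_mul {g : ℝ × ℝ → ℝ} (hg : ContDiff ℝ (⊤ : ℕ∞) g) (c : ℝ) :
    pdy (fun t => c * g t) = fun z => c * pdy g z := by
  funext z; exact pd_const_mul hg c _ z

lemma pd_neg_add_mul {A B : ℝ × ℝ → ℝ} (hA : ContDiff ℝ (⊤ : ℕ∞) A)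
    (hB : ContDiff ℝ (⊤ : ℕ∞) B) (c : ℝ) (v z : ℝ × ℝ) :
    fderiv ℝ (fun t => -(A t + c * B t)) z v = -(fderiv ℝ A z v + c * fderiv ℝ B z v) := by
  rw [(show HasFDerivAt (fun t => -(A t + c * B t)) _ z from
    ((diffAt hA z).hasFDerivAt.add ((diffAt hB z).hasFDerivAt.const_mul c)).neg).fderiv]
  simp

lemma pd_neg_mul_add {A B : ℝ × ℝ → ℝ} (hA : ContDiff ℝ (⊤ : ℕ∞) A)
    (hB : ContDiff ℝ (⊤ : ℕ∞) B) (c : ℝ) (v z : ℝ × ℝ) :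
    fderiv ℝ (fun t => -(c * B t + A t)) z v = -(c * fderiv ℝ B z v + fderiv ℝ A z v) := by
  rw [(show HasFDerivAt (fun t => -(c * B t + A t)) _ z from
    (((diffAt hB z).hasFDerivAt.const_mul c).add (diffAt hA z).hasFDerivAt).neg).fderiv]
  simp

/-- Key mixed-derivative identity for `P11 = u_yx + u_xy`. -/
lemma key (u : ℝ × ℝ → ℝ) (hu : ContDiff ℝ (⊤ : ℕ∞) u) (z : ℝ × ℝ) :
    (1 / 2) * pdx (pdy (fun t => pdy (pdx u) t + pdx (pdy u) t)) z
      + (1 / 2) * pdy (pdx (fun t => pdy (pdx u) t + pdx (pdy u) t)) z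
    = 2 * pdx (pdx (pdy (pdy u))) z := by
  set g := pdy (pdx u) with hg
  have hgs : ContDiff ℝ (⊤ : ℕ∞) g := pdy_smooth (pdx_smooth hu)
  have hP : (fun t => pdy (pdx u) t + pdx (pdy u) t) = fun t => (2:ℝ) * g t := by
    funext t
    have := congrFun (pd_comm hu) t
    simp only [hg]
    rw [← this]; ring
  have hgx : pdx g = pdx (pdx (pdy u)) := by
    rw [hg, ← pd_comm hu]
  have h1 : pdy (pdx g) = pdx (pdx (pdy (pdy u))) := by
    rw [hgx, ← pd_comm (pdx_smooth (pdy_smooth hu))]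
    have : pdy (pdx (pdy u)) = pdx (pdy (pdy u)) := pd_comm (pdy_smooth hu) ▸ rfl
    rw [show pdy (pdx (pdy u)) = pdx (pdy (pdy u)) from (pd_comm (pdy_smooth hu)).symm]
  have h2 : pdx (pdy g) = pdx (pdx (pdy (pdy u))) := by
    rw [pd_comm hgs, h1]
  rw [hP, pdx_const_mul hgs, pdy_const_mul hgs]
  have hx2 : pdy (fun z => (2:ℝ) * pdx g z) = fun z => (2:ℝ) * pdy (pdx g) z :=
    pdy_const_mul (pdx_smooth hgs) 2
  have hy2 : pdx (fun z => (2:ℝ) * pdy g z) = fun z => (2:ℝ) * pdx (pdy g) z :=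
    pdx_const_mul (pdy_smooth hgs) 2
  rw [hx2, hy2]
  have e1 := congrFun h1 z
  have e2 := congrFun h2 z
  dsimp only
  rw [e1, e2]; ring

/-- a smooth `u` satisfies the clamped-plate equation
`u_xxxx + 2u_xxyy + u_yyyy = q` iff there are smooth functions
`u₁, u₂, p¹, p², p²⁰, p¹¹, p⁰²` solving the first-order unified
(Lagrangian–Hamiltonian) system of the plate Lagrangian. -/
theorem statement13 (q : ℝ) (u : ℝ × ℝ → ℝ) (hu : ContDiff ℝ (⊤ : ℕ∞) u) :
    (∀ z : ℝ × ℝ,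
        pdx (pdx (pdx (pdx u))) z + 2 * pdx (pdx (pdy (pdy u))) z
          + pdy (pdy (pdy (pdy u))) z = q)
      ↔ ∃ u1 u2 p1 p2 p20 p11 p02 : ℝ × ℝ → ℝ,
          ContDiff ℝ (⊤ : ℕ∞) u1 ∧ ContDiff ℝ (⊤ : ℕ∞) u2 ∧
          ContDiff ℝ (⊤ : ℕ∞) p1 ∧ ContDiff ℝ (⊤ : ℕ∞) p2 ∧
          ContDiff ℝ (⊤ : ℕ∞) p20 ∧ ContDiff ℝ (⊤ : ℕ∞) p11 ∧
          ContDiff ℝ (⊤ : ℕ∞) p02 ∧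
          ∀ z : ℝ × ℝ,
            pdx u z = u1 z ∧ pdy u z = u2 z ∧
            pdx u1 z = p20 z ∧ pdy u1 z + pdx u2 z = p11 z ∧ pdy u2 z = p02 z ∧
            pdx p1 z + pdy p2 z + q = 0 ∧
            pdx p20 z + (1 / 2) * pdy p11 z + p1 z = 0 ∧
            (1 / 2) * pdx p11 z + pdy p02 z + p2 z = 0 := by
  constructor
  · intro hpde
    set u1 := pdx u with hu1
    set u2 := pdy u with hu2
    set p20 := pdx u1 with hp20
    set p11 : ℝ × ℝ → ℝ := fun t => pdy u1 t + pdx u2 t with hp11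
    set p02 := pdy u2 with hp02
    have hsu1 : ContDiff ℝ (⊤ : ℕ∞) u1 := pdx_smooth hu
    have hsu2 : ContDiff ℝ (⊤ : ℕ∞) u2 := pdy_smooth hu
    have hs20 : ContDiff ℝ (⊤ : ℕ∞) p20 := pdx_smooth hsu1
    have hs11 : ContDiff ℝ (⊤ : ℕ∞) p11 := (pdy_smooth hsu1).add (pdx_smooth hsu2)
    have hs02 : ContDiff ℝ (⊤ : ℕ∞) p02 := pdy_smooth hsu2
    set p1 : ℝ × ℝ → ℝ := fun t => -(pdx p20 t + (1/2) * pdy p11 t) with hp1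
    set p2 : ℝ × ℝ → ℝ := fun t => -((1/2) * pdx p11 t + pdy p02 t) with hp2
    have hs1 : ContDiff ℝ (⊤ : ℕ∞) p1 :=
      ((pdx_smooth hs20).add ((pdy_smooth hs11).const_smul ((1:ℝ)/2))).neg
    have hs2 : ContDiff ℝ (⊤ : ℕ∞) p2 :=
      (((pdx_smooth hs11).const_smul ((1:ℝ)/2)).add (pdy_smooth hs02)).neg
    refine ⟨u1, u2, p1, p2, p20, p11, p02, hsu1, hsu2, hs1, hs2, hs20, hs11, hs02, ?_⟩
    intro z
    refine ⟨rfl, rfl, rfl, rfl, rfl, ?_, by simp only [hp1]; ring, by simp only [hp2]; ring⟩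
    have e1 : pdx p1 z = -(pdx (pdx p20) z + (1/2) * pdx (pdy p11) z) :=
      pd_neg_add_mul (pdx_smooth hs20) (pdy_smooth hs11) (1/2) _ z
    have e2 : pdy p2 z = -((1/2) * pdy (pdx p11) z + pdy (pdy p02) z) :=
      pd_neg_mul_add (pdy_smooth hs02) (pdx_smooth hs11) (1/2) _ z
    have hk : (1/2) * pdx (pdy p11) z + (1/2) * pdy (pdx p11) z = 2 * pdx (pdx p02) z :=
      key u hu z
    have hpz := hpde z
    rw [e1, e2]
    linarith
  · rintro ⟨u1, u2, p1, p2, p20, p11, p02, hsu1, hsu2, hs1, hs2, hs20, hs11, hs02, h⟩ z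
    have hu1 : u1 = pdx u := funext fun t => ((h t).1).symm
    have hu2 : u2 = pdy u := funext fun t => ((h t).2.1).symm
    have h20 : p20 = pdx (pdx u) := funext fun t => by
      rw [← (h t).2.2.1, hu1]
    have h11 : p11 = fun t => pdy (pdx u) t + pdx (pdy u) t := funext fun t => by
      rw [← (h t).2.2.2.1, hu1, hu2]
    have h02 : p02 = pdy (pdy u) := funext fun t => by
      rw [← (h t).2.2.2.2.1, hu2]
    have h1f : p1 = fun t => -(pdx p20 t + (1/2) * pdy p11 t) := funext fun t => by
      have := (h t).2.2.2.2.2.2.1; linarith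
    have h2f : p2 = fun t => -((1/2) * pdx p11 t + pdy p02 t) := funext fun t => by
      have := (h t).2.2.2.2.2.2.2; linarith
    have e1 : pdx p1 z = -(pdx (pdx p20) z + (1/2) * pdx (pdy p11) z) := by
      rw [h1f]; exact pd_neg_add_mul (pdx_smooth hs20) (pdy_smooth hs11) (1/2) _ z
    have e2 : pdy p2 z = -((1/2) * pdy (pdx p11) z + pdy (pdy p02) z) := by
      rw [h2f]; exact pd_neg_mul_add (pdy_smooth hs02) (pdx_smooth hs11) (1/2) _ z
    have hk : (1/2) * pdx (pdy p11) z + (1/2) * pdy (pdx p11) z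
        = 2 * pdx (pdx (pdy (pdy u))) z := by
      rw [h11]; exact key u hu z
    have e20 : pdx (pdx p20) z = pdx (pdx (pdx (pdx u))) z := by rw [h20]
    have e02 : pdy (pdy p02) z = pdy (pdy (pdy (pdy u))) z := by rw [h02]
    have eq6 := (h z).2.2.2.2.2.1
    rw [e1, e2, e20, e02] at eq6
    linarith
end
end
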